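/- Let p̃ be (C, α)-multicalibrated, let δ ∈ (0,1] with m = 1/δ an integer, and let p̄_δ be the bucketed predictor with p̄_δ(x) = jδ whenever p̃(x) ∈ B_j. Then p̄_δ is (C, 2√(α/δ) + δ)-swap multicalibrated, and max_{x∈X} |p̃(x) − p̄_δ(x)| ≤ δ. -/

import Mathlib

open Finset

noncomputable section

open Classical in
/-- Real-valued indicator of a proposition. -/
noncomputable def ind (P : Prop) : ℝ := if P then 1 else 0

/-- The real value of a Boolean label. -/
def yval : Bool → ℝ := fun y => if y then 1 else 0

variable {X : Type*}

/-- Expectation under a joint distribution `μ` on `X × {0,1}` of `f(x,y)`. -/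
def Exp [Fintype X] (μ : X → Bool → ℝ) (f : X → Bool → ℝ) : ℝ :=
  ∑ x, ∑ y, μ x y * f x y

/-- `μ` is a probability distribution on `X × {0,1}`. -/
def IsProb [Fintype X] (μ : X → Bool → ℝ) : Prop :=
  (∀ x y, 0 ≤ μ x y) ∧ (∑ x, ∑ y, μ x y) = 1

/-- Probability of the level set `h(x) = v`. -/
def pmass [Fintype X] (μ : X → Bool → ℝ) (h : X → ℝ) (v : ℝ) : ℝ :=
  ∑ x, ∑ y, ind (h x = v) * μ x y

/-- Conditional expectation of `f(x,y)` given `h(x) = v` (the distribution `D|_v`). -/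
def CExp [Fintype X] (μ : X → Bool → ℝ) (h : X → ℝ) (v : ℝ) (f : X → Bool → ℝ) : ℝ :=
  (∑ x, ∑ y, ind (h x = v) * (μ x y * f x y)) / pmass μ h v

/-- Expectation of `g(v)` over `v ~ D_h`, the distribution of `h(x)`. -/
def VExp [Fintype X] (μ : X → Bool → ℝ) (h : X → ℝ) (g : ℝ → ℝ) : ℝ :=
  Exp μ (fun x _ => g (h x))

/-- The bucketed predictor value: with `δ = 1/m`, a value `t ∈ B_j = [(j−1)δ, jδ)`
(for `j < m`) is mapped to `jδ`, and `t ∈ B_m = [1−δ, 1]` is mapped to `mδ = 1`. -/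
def bucketed (m : ℕ) (t : ℝ) : ℝ :=
  if 1 - 1/(m:ℝ) ≤ t then 1 else ((⌊t * (m:ℝ)⌋ : ℝ) + 1) / (m:ℝ)



def cnum [Fintype X] (μ : X → Bool → ℝ) (h : X → ℝ) (v : ℝ) (f : X → Bool → ℝ) : ℝ :=
  ∑ x, ∑ y, ind (h x = v) * (μ x y * f x y)

lemma CExp_eq [Fintype X] (μ : X → Bool → ℝ) (h : X → ℝ) (v : ℝ) (f : X → Bool → ℝ) :
    CExp μ h v f = cnum μ h v f / pmass μ h v := rfl

lemma ind_of_true {P : Prop} (hP : P) : ind P = 1 := by simp [ind, hP]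
lemma ind_of_false {P : Prop} (hP : ¬ P) : ind P = 0 := by simp [ind, hP]

lemma cnum_eq_sum [Fintype X] (μ : X → Bool → ℝ) (h : X → ℝ) (v : ℝ) (f : X → Bool → ℝ) :
    cnum μ h v f = ∑ x, ind (h x = v) * ∑ y, μ x y * f x y := by
  unfold cnum; simp_rw [Finset.mul_sum]

lemma pmass_eq_cnum [Fintype X] (μ : X → Bool → ℝ) (h : X → ℝ) (v : ℝ) :
    pmass μ h v = cnum μ h v (fun _ _ => 1) := by
  unfold pmass cnum; simp [mul_one]

lemma cnum_congr [Fintype X] (μ : X → Bool → ℝ) (h : X → ℝ) (v : ℝ) {f g : X → Bool → ℝ}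
    (hfg : ∀ x y, h x = v → f x y = g x y) : cnum μ h v f = cnum μ h v g := by
  unfold cnum
  refine Finset.sum_congr rfl fun x _ => Finset.sum_congr rfl fun y _ => ?_
  by_cases hx : h x = v
  · rw [hfg x y hx]
  · rw [ind_of_false hx]; ring

lemma cnum_add [Fintype X] (μ : X → Bool → ℝ) (h : X → ℝ) (v : ℝ) (f g : X → Bool → ℝ) :
    cnum μ h v (fun x y => f x y + g x y) = cnum μ h v f + cnum μ h v g := by
  unfold cnum
  rw [← Finset.sum_add_distrib]
  refine Finset.sum_congr rfl fun x _ => ?_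
  rw [← Finset.sum_add_distrib]
  exact Finset.sum_congr rfl fun y _ => by ring

lemma abs_cnum_le [Fintype X] {μ : X → Bool → ℝ} (hμ : ∀ x y, 0 ≤ μ x y)
    (h : X → ℝ) (v : ℝ) {f : X → Bool → ℝ} {B : ℝ}
    (hB : ∀ x y, h x = v → |f x y| ≤ B) :
    |cnum μ h v f| ≤ B * pmass μ h v := by
  unfold cnum pmass
  calc |∑ x, ∑ y, ind (h x = v) * (μ x y * f x y)|
      ≤ ∑ x, |∑ y, ind (h x = v) * (μ x y * f x y)| := Finset.abs_sum_le_sum_abs _ _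
    _ ≤ ∑ x, ∑ y, |ind (h x = v) * (μ x y * f x y)| :=
        Finset.sum_le_sum fun x _ => Finset.abs_sum_le_sum_abs _ _
    _ ≤ ∑ x, ∑ y, B * (ind (h x = v) * μ x y) := by
        refine Finset.sum_le_sum fun x _ => Finset.sum_le_sum fun y _ => ?_
        by_cases hx : h x = v
        · rw [ind_of_true hx, abs_mul, abs_one, one_mul, abs_mul, abs_of_nonneg (hμ x y),
            one_mul, mul_comm B]
          exact mul_le_mul_of_nonneg_left (hB x y hx) (hμ x y)
        · rw [ind_of_false hx]; simp
    _ = B * ∑ x, ∑ y, ind (h x = v) * μ x y := by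
        simp_rw [Finset.mul_sum]

lemma pmass_nonneg [Fintype X] {μ : X → Bool → ℝ} (hμ : ∀ x y, 0 ≤ μ x y)
    (h : X → ℝ) (v : ℝ) : 0 ≤ pmass μ h v := by
  unfold pmass
  refine Finset.sum_nonneg fun x _ => Finset.sum_nonneg fun y _ => ?_
  by_cases hx : h x = v
  · rw [ind_of_true hx]; simpa using hμ x y
  · rw [ind_of_false hx]; simp

lemma abs_CExp_le [Fintype X] {μ : X → Bool → ℝ} (hμ : ∀ x y, 0 ≤ μ x y)
    (h : X → ℝ) (v : ℝ) {f : X → Bool → ℝ} {B : ℝ} (hB0 : 0 ≤ B)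
    (hB : ∀ x y, h x = v → |f x y| ≤ B) :
    |CExp μ h v f| ≤ B := by
  rw [CExp_eq, abs_div, abs_of_nonneg (pmass_nonneg hμ h v)]
  rcases eq_or_lt_of_le (pmass_nonneg hμ h v) with hp | hp
  · rw [← hp]; simpa using hB0
  · rw [div_le_iff₀ hp]
    exact abs_cnum_le hμ h v hB

lemma cnum_fiber [Fintype X] (μ : X → Bool → ℝ) (pt : X → ℝ) (φ : ℝ → ℝ) (v : ℝ)
    (f : X → Bool → ℝ) :
    cnum μ (fun x => φ (pt x)) v f
      = ∑ u ∈ (univ.image pt).filter (fun u => φ u = v), cnum μ pt u f := by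
  classical
  rw [cnum_eq_sum]
  simp_rw [cnum_eq_sum]
  rw [Finset.sum_comm]
  refine Finset.sum_congr rfl fun x _ => ?_
  rw [← Finset.sum_mul]
  congr 1
  have : ∀ u, ind (pt x = u) = if u = pt x then (1:ℝ) else 0 := by
    intro u
    by_cases hu : pt x = u
    · subst hu; simp [ind]
    · simp [ind_of_false hu, Ne.symm hu]
  simp_rw [this]
  rw [Finset.sum_ite_eq' _ (pt x) (fun _ => (1:ℝ))]
  by_cases hv : φ (pt x) = v
  · rw [ind_of_true hv, if_pos]
    simp [Finset.mem_filter, Finset.mem_image, hv]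
  · rw [ind_of_false hv, if_neg]
    simp [Finset.mem_filter, Finset.mem_image, hv]

lemma VExp_eq_sum_image [Fintype X] (μ : X → Bool → ℝ) (h : X → ℝ) (g : ℝ → ℝ) :
    VExp μ h g = ∑ v ∈ univ.image h, pmass μ h v * g v := by
  classical
  unfold VExp Exp
  have key : ∀ v ∈ univ.image h, pmass μ h v * g v
      = ∑ x ∈ univ.filter (fun x => h x = v), ∑ y, μ x y * g (h x) := by
    intro v _
    rw [pmass_eq_cnum, cnum_eq_sum]
    simp_rw [mul_one]
    rw [Finset.sum_mul, Finset.sum_filter]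
    refine Finset.sum_congr rfl fun x _ => ?_
    by_cases hx : h x = v
    · rw [ind_of_true hx, if_pos hx, hx, ← Finset.sum_mul]
      ring
    · rw [ind_of_false hx, if_neg hx]; ring
  rw [Finset.sum_congr rfl key]
  rw [Finset.sum_fiberwise_of_maps_to (fun x _ => Finset.mem_image_of_mem h (Finset.mem_univ x))]

lemma bucketed_close {m : ℕ} (hm : 0 < (m:ℝ)) {t : ℝ} (ht : t ∈ Set.Icc (0:ℝ) 1) :
    |t - bucketed m t| ≤ 1 / m := by
  unfold bucketed
  have hm0 : (m:ℝ) ≠ 0 := ne_of_gt hm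
  have hinv : 0 < 1 / (m:ℝ) := by positivity
  by_cases hc : 1 - 1/(m:ℝ) ≤ t
  · rw [if_pos hc, abs_of_nonpos (by linarith [ht.2])]
    linarith [ht.2]
  · rw [if_neg hc]
    have h1 : (⌊t * m⌋ : ℝ) ≤ t * m := Int.floor_le _
    have h2 : t * m < ⌊t * m⌋ + 1 := Int.lt_floor_add_one _
    rw [abs_of_nonpos]
    · rw [neg_sub, sub_le_iff_le_add, div_le_iff₀ hm, add_mul, div_mul_cancel₀ _ hm0]
      linarith
    · rw [sub_nonpos, le_div_iff₀ hm]
      linarith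

lemma VExp_nonneg [Fintype X] {μ : X → Bool → ℝ} (hμ : ∀ x y, 0 ≤ μ x y)
    (h : X → ℝ) {g : ℝ → ℝ} (hg : ∀ v, 0 ≤ g v) : 0 ≤ VExp μ h g := by
  unfold VExp Exp
  exact Finset.sum_nonneg fun x _ => Finset.sum_nonneg fun y _ =>
    mul_nonneg (hμ x y) (hg _)

lemma min_le_sqrt_mul_sqrt {a b : ℝ} (ha : 0 ≤ a) (hb : 0 ≤ b) :
    min a b ≤ Real.sqrt a * Real.sqrt b := by
  rcases le_total a b with hab | hab
  · rw [min_eq_left hab]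
    nth_rewrite 1 [← Real.mul_self_sqrt ha]
    exact mul_le_mul_of_nonneg_left (Real.sqrt_le_sqrt hab) (Real.sqrt_nonneg a)
  · rw [min_eq_right hab]
    nth_rewrite 1 [← Real.mul_self_sqrt hb]
    exact mul_le_mul_of_nonneg_right (Real.sqrt_le_sqrt hab) (Real.sqrt_nonneg b)

lemma sum_sqrt_le {ι : Type*} (s : Finset ι) (f : ι → ℝ) (hf : ∀ i ∈ s, 0 ≤ f i) :
    ∑ i ∈ s, Real.sqrt (f i) ≤ Real.sqrt (s.card) * Real.sqrt (∑ i ∈ s, f i) := by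
  have h1 : (∑ i ∈ s, Real.sqrt (f i)) ^ 2 ≤ (s.card : ℝ) * ∑ i ∈ s, f i := by
    have := Finset.sum_mul_sq_le_sq_mul_sq s (fun _ => (1:ℝ)) (fun i => Real.sqrt (f i))
    simp only [one_mul, one_pow] at this
    calc (∑ i ∈ s, Real.sqrt (f i)) ^ 2
        ≤ (∑ _i ∈ s, (1:ℝ)) * ∑ i ∈ s, Real.sqrt (f i) ^ 2 := this
      _ = (s.card : ℝ) * ∑ i ∈ s, f i := by
          rw [Finset.sum_const, nsmul_eq_mul, mul_one]
          congr 1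
          exact Finset.sum_congr rfl fun i hi => Real.sq_sqrt (hf i hi)
  have h2 : 0 ≤ ∑ i ∈ s, Real.sqrt (f i) :=
    Finset.sum_nonneg fun i _ => Real.sqrt_nonneg _
  calc ∑ i ∈ s, Real.sqrt (f i) = Real.sqrt ((∑ i ∈ s, Real.sqrt (f i)) ^ 2) :=
        (Real.sqrt_sq h2).symm
    _ ≤ Real.sqrt ((s.card : ℝ) * ∑ i ∈ s, f i) := Real.sqrt_le_sqrt h1
    _ = Real.sqrt (s.card) * Real.sqrt (∑ i ∈ s, f i) :=
        Real.sqrt_mul (by positivity) _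

/-- discretizing a `(C,α)`-multicalibrated predictor into buckets of
width `δ = 1/m` yields a `(C, 2√(α/δ) + δ)`-swap multicalibrated predictor that is
pointwise `δ`-close to the original. -/
theorem bucketing_gives_swapMC [Fintype X]
    (μ : X → Bool → ℝ) (hμ : IsProb μ)
    (pt : X → ℝ) (hrange : ∀ x, pt x ∈ Set.Icc (0:ℝ) 1)
    (hpos : ∀ x : X, 0 < pmass μ pt (pt x))
    (C : Finset (X → ℝ)) (hC : C.Nonempty)
    (hbdd : ∀ c ∈ C, ∀ x, |c x| ≤ 1)
    (α : ℝ)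
    (hmc : C.sup' hC (fun c => VExp μ pt (fun v =>
      |CExp μ pt v (fun x y => c x * (yval y - v))|)) ≤ α)
    (δ : ℝ) (hδ : 0 < δ) (hδ1 : δ ≤ 1) (m : ℕ) (hm : (m : ℝ) * δ = 1) :
    (VExp μ (fun x => bucketed m (pt x)) (fun v => C.sup' hC (fun c =>
        |CExp μ (fun x => bucketed m (pt x)) v (fun x y => c x * (yval y - v))|)) ≤
      2 * Real.sqrt (α / δ) + δ)
    ∧ ∀ x, |pt x - bucketed m (pt x)| ≤ δ := by
  classical
  have hμ0 := hμ.1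
  have hmpos : 0 < (m:ℝ) := by nlinarith
  have hm0 : (m:ℝ) ≠ 0 := ne_of_gt hmpos
  have hδm : δ = 1 / m := by rw [eq_div_iff hm0]; linarith
  set h : X → ℝ := fun x => bucketed m (pt x) with hh
  have close : ∀ x, |pt x - h x| ≤ δ := fun x => by
    rw [hδm]; exact bucketed_close hmpos (hrange x)
  refine ⟨?_, close⟩
  have hmc' := (Finset.sup'_le_iff hC _).mp hmc
  have hα : 0 ≤ α := by
    obtain ⟨c0, hc0⟩ := hC
    exact le_trans (VExp_nonneg hμ0 pt (fun v => abs_nonneg _)) (hmc' c0 hc0)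
  set U := Finset.univ.image pt with hU
  set V := Finset.univ.image h with hV
  have hmcU : ∀ c ∈ C, ∑ u ∈ U, pmass μ pt u *
      |CExp μ pt u (fun x y => c x * (yval y - u))| ≤ α := by
    intro c hc
    have hv := hmc' c hc
    rw [VExp_eq_sum_image] at hv
    rw [hU]
    exact hv
  have Pptpos : ∀ u ∈ U, 0 < pmass μ pt u := by
    intro u hu
    obtain ⟨x, _, rfl⟩ := Finset.mem_image.mp hu
    exact hpos x
  have Pptrange : ∀ u ∈ U, u ∈ Set.Icc (0:ℝ) 1 := by
    intro u hu
    obtain ⟨x, _, rfl⟩ := Finset.mem_image.mp hu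
    exact hrange x
  have PHfiber : ∀ v, pmass μ h v
      = ∑ u ∈ U.filter (fun u => bucketed m u = v), pmass μ pt u := by
    intro v
    rw [pmass_eq_cnum, hh, cnum_fiber μ pt (bucketed m) v, hU]
    exact Finset.sum_congr rfl fun u _ => (pmass_eq_cnum μ pt u).symm
  have PHpos : ∀ v ∈ V, 0 < pmass μ h v := by
    intro v hv
    obtain ⟨x, _, rfl⟩ := Finset.mem_image.mp hv
    rw [PHfiber]
    refine Finset.sum_pos' (fun u hu => le_of_lt (Pptpos u (Finset.mem_filter.mp hu).1)) ?_
    refine ⟨pt x, Finset.mem_filter.mpr ⟨?_, rfl⟩, hpos x⟩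
    rw [hU]; exact Finset.mem_image_of_mem pt (Finset.mem_univ x)
  have hmne : m ≠ 0 := by rintro rfl; simp at hmpos
  have cardV : (V.card : ℝ) ≤ (m:ℝ) := by
    have hsub : V ⊆ (Finset.Icc 1 m).image (fun j : ℕ => (j:ℝ)/m) := by
      intro v hv
      obtain ⟨x, _, rfl⟩ := Finset.mem_image.mp hv
      rw [Finset.mem_image]
      by_cases hc : 1 - 1/(m:ℝ) ≤ pt x
      · refine ⟨m, Finset.mem_Icc.mpr ⟨Nat.one_le_iff_ne_zero.mpr hmne, le_refl m⟩, ?_⟩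
        show ((m:ℕ):ℝ)/m = h x
        rw [hh]
        simp only [bucketed, if_pos hc]
        exact div_self hm0
      · have ht0 : 0 ≤ pt x := (hrange x).1
        have hf0 : (0:ℤ) ≤ ⌊pt x * m⌋ := Int.floor_nonneg.mpr (by positivity)
        have hcast : ((⌊pt x * m⌋.toNat : ℕ) : ℝ) = ((⌊pt x * m⌋ : ℤ) : ℝ) := by
          exact_mod_cast congrArg (fun z : ℤ => (z : ℝ)) (Int.toNat_of_nonneg hf0)
        have hmul : (1 - 1/(m:ℝ)) * m = m - 1 := by field_simp
        have hlt : pt x * m < (m:ℝ) - 1 := by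
          rw [← hmul]
          exact mul_lt_mul_of_pos_right (lt_of_not_ge hc) hmpos
        have hjr : (⌊pt x * m⌋ : ℝ) + 1 ≤ m := by
          have := Int.floor_le (pt x * m); linarith
        refine ⟨⌊pt x * m⌋.toNat + 1, Finset.mem_Icc.mpr ⟨Nat.le_add_left 1 _, ?_⟩, ?_⟩
        · have : ((⌊pt x * m⌋.toNat + 1 : ℕ) : ℝ) ≤ (m:ℝ) := by push_cast [hcast]; linarith
          exact_mod_cast this
        · show ((⌊pt x * m⌋.toNat + 1 : ℕ) : ℝ)/m = h x
          rw [hh]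
          simp only [bucketed, if_neg hc]
          push_cast [hcast]
          ring
    calc (V.card : ℝ) ≤ (((Finset.Icc 1 m).image (fun j : ℕ => (j:ℝ)/m)).card : ℝ) := by
          exact_mod_cast Finset.card_le_card hsub
      _ ≤ ((Finset.Icc 1 m).card : ℝ) := by exact_mod_cast Finset.card_image_le
      _ = (m:ℝ) := by rw [Nat.card_Icc]; simp
  have key : ∀ v ∈ V, pmass μ h v * (C.sup' hC (fun c =>
        |CExp μ h v (fun x y => c x * (yval y - v))|))
      ≤ δ * pmass μ h v + Real.sqrt α * Real.sqrt (pmass μ h v) := by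
    intro v hv
    have hPH := PHpos v hv
    have hsup : C.sup' hC (fun c => |CExp μ h v (fun x y => c x * (yval y - v))|)
        ≤ δ + min α (pmass μ h v) / pmass μ h v := by
      rw [Finset.sup'_le_iff]
      intro c hc
      have hsplit : CExp μ h v (fun x y => c x * (yval y - v))
          = CExp μ h v (fun x y => c x * (yval y - pt x))
            + CExp μ h v (fun x y => c x * (pt x - v)) := by
        have hcn : cnum μ h v (fun x y => c x * (yval y - v))
            = cnum μ h v (fun x y => c x * (yval y - pt x))
              + cnum μ h v (fun x y => c x * (pt x - v)) := by
          rw [← cnum_add]; congr 1; funext x y; ring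
        rw [CExp_eq, CExp_eq, CExp_eq, hcn, add_div]
      have h2 : |CExp μ h v (fun x y => c x * (pt x - v))| ≤ δ := by
        refine abs_CExp_le hμ0 h v (le_of_lt hδ) ?_
        intro x y hx
        rw [abs_mul]
        calc |c x| * |pt x - v| ≤ 1 * δ := by
              refine mul_le_mul (hbdd c hc x) ?_ (abs_nonneg _) zero_le_one
              rw [← hx]; exact close x
          _ = δ := one_mul δ
      have h1 : |CExp μ h v (fun x y => c x * (yval y - pt x))|
          ≤ min α (pmass μ h v) / pmass μ h v := by
        rw [CExp_eq, abs_div, abs_of_pos hPH]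
        have hfib : cnum μ h v (fun x y => c x * (yval y - pt x))
            = ∑ u ∈ U.filter (fun u => bucketed m u = v),
                cnum μ pt u (fun x y => c x * (yval y - pt x)) := by
          rw [hh, cnum_fiber μ pt (bucketed m) v, hU]
        have hterm : ∀ u ∈ U.filter (fun u => bucketed m u = v),
            |cnum μ pt u (fun x y => c x * (yval y - pt x))|
              = pmass μ pt u * |CExp μ pt u (fun x y => c x * (yval y - u))| := by
          intro u hu
          have huU : u ∈ U := (Finset.mem_filter.mp hu).1
          have hcg : cnum μ pt u (fun x y => c x * (yval y - pt x))
              = cnum μ pt u (fun x y => c x * (yval y - u)) :=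
            cnum_congr μ pt u (fun x y hx => by rw [hx])
          rw [hcg, CExp_eq, abs_div, abs_of_pos (Pptpos u huU), mul_comm,
            div_mul_cancel₀ _ (ne_of_gt (Pptpos u huU))]
        have habs : |cnum μ h v (fun x y => c x * (yval y - pt x))|
            ≤ ∑ u ∈ U.filter (fun u => bucketed m u = v),
                pmass μ pt u * |CExp μ pt u (fun x y => c x * (yval y - u))| := by
          rw [hfib]
          refine le_trans (Finset.abs_sum_le_sum_abs _ _) ?_
          exact le_of_eq (Finset.sum_congr rfl hterm)
        have hS1 : ∑ u ∈ U.filter (fun u => bucketed m u = v),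
            pmass μ pt u * |CExp μ pt u (fun x y => c x * (yval y - u))| ≤ α :=
          le_trans (Finset.sum_le_sum_of_subset_of_nonneg
            (Finset.filter_subset _ _) (fun u hu _ =>
              mul_nonneg (le_of_lt (Pptpos u hu)) (abs_nonneg _))) (hmcU c hc)
        have hS2 : ∑ u ∈ U.filter (fun u => bucketed m u = v),
            pmass μ pt u * |CExp μ pt u (fun x y => c x * (yval y - u))|
              ≤ pmass μ h v := by
          rw [PHfiber]
          refine Finset.sum_le_sum fun u hu => ?_
          have huU : u ∈ U := (Finset.mem_filter.mp hu).1
          have hu01 := Pptrange u huU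
          have hce1 : |CExp μ pt u (fun x y => c x * (yval y - u))| ≤ 1 := by
            refine abs_CExp_le hμ0 pt u zero_le_one ?_
            intro x y hx
            rw [abs_mul]
            have hy : |yval y - u| ≤ 1 := by
              refine abs_le.mpr ⟨?_, ?_⟩ <;> rcases y <;> simp [yval] <;>
                first
                  | linarith [hu01.1, hu01.2]
                  | skip
            calc |c x| * |yval y - u| ≤ 1 * 1 :=
                mul_le_mul (hbdd c hc x) hy (abs_nonneg _) zero_le_one
              _ = 1 := one_mul 1
          calc pmass μ pt u * |CExp μ pt u (fun x y => c x * (yval y - u))|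
              ≤ pmass μ pt u * 1 :=
                mul_le_mul_of_nonneg_left hce1 (le_of_lt (Pptpos u huU))
            _ = pmass μ pt u := mul_one _
        rw [div_le_div_iff₀ hPH hPH]
        exact mul_le_mul_of_nonneg_right
          (le_min (le_trans habs hS1) (le_trans habs hS2)) (le_of_lt hPH)
      calc |CExp μ h v (fun x y => c x * (yval y - v))|
          ≤ |CExp μ h v (fun x y => c x * (yval y - pt x))|
            + |CExp μ h v (fun x y => c x * (pt x - v))| := by
            rw [hsplit]; exact abs_add_le _ _
        _ ≤ min α (pmass μ h v) / pmass μ h v + δ := add_le_add h1 h2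
        _ = δ + min α (pmass μ h v) / pmass μ h v := add_comm _ _
    calc pmass μ h v * (C.sup' hC (fun c =>
            |CExp μ h v (fun x y => c x * (yval y - v))|))
        ≤ pmass μ h v * (δ + min α (pmass μ h v) / pmass μ h v) :=
          mul_le_mul_of_nonneg_left hsup (le_of_lt hPH)
      _ = δ * pmass μ h v + min α (pmass μ h v) := by field_simp
      _ ≤ δ * pmass μ h v + Real.sqrt α * Real.sqrt (pmass μ h v) :=
          add_le_add le_rfl (min_le_sqrt_mul_sqrt hα (le_of_lt hPH))
  have hsum1 : ∑ v ∈ V, pmass μ h v = 1 := by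
    have e := VExp_eq_sum_image μ h (fun _ => (1:ℝ))
    simp only [mul_one] at e
    rw [hV, ← e]
    unfold VExp Exp
    simp only [mul_one]
    exact hμ.2
  have hsqrt : ∑ v ∈ V, Real.sqrt (pmass μ h v) ≤ Real.sqrt (m:ℝ) := by
    calc ∑ v ∈ V, Real.sqrt (pmass μ h v)
        ≤ Real.sqrt V.card * Real.sqrt (∑ v ∈ V, pmass μ h v) :=
          sum_sqrt_le V _ (fun v _ => pmass_nonneg hμ0 h v)
      _ = Real.sqrt V.card := by rw [hsum1, Real.sqrt_one, mul_one]
      _ ≤ Real.sqrt (m:ℝ) := Real.sqrt_le_sqrt cardV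
  have hαδ : Real.sqrt α * Real.sqrt (m:ℝ) = Real.sqrt (α/δ) := by
    rw [← Real.sqrt_mul hα]
    congr 1
    rw [hδm]
    field_simp
  rw [VExp_eq_sum_image, ← hV]
  calc ∑ v ∈ V, pmass μ h v * (C.sup' hC (fun c =>
          |CExp μ h v (fun x y => c x * (yval y - v))|))
      ≤ ∑ v ∈ V, (δ * pmass μ h v + Real.sqrt α * Real.sqrt (pmass μ h v)) :=
        Finset.sum_le_sum key
    _ = δ * (∑ v ∈ V, pmass μ h v) + Real.sqrt α * ∑ v ∈ V, Real.sqrt (pmass μ h v) := by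
        rw [Finset.sum_add_distrib, Finset.mul_sum, Finset.mul_sum]
    _ ≤ δ * 1 + Real.sqrt α * Real.sqrt (m:ℝ) := by
        rw [hsum1]
        exact add_le_add le_rfl (mul_le_mul_of_nonneg_left hsqrt (Real.sqrt_nonneg α))
    _ = Real.sqrt (α/δ) + δ := by rw [mul_one, hαδ]; ring
    _ ≤ 2 * Real.sqrt (α/δ) + δ := by nlinarith [Real.sqrt_nonneg (α/δ)]
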